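/- Let n = p^a q^b, where p and q are distinct primes and a, b ≥ 2. Then the independence number of the prime-coprime graph of the cyclic group Z_n equals n − min{p^a q, p q^b, p^a + q^b − 1}. -/

import Mathlib

/-- The prime-coprime graph: distinct vertices `g, h` are adjacent iff
`gcd (orderOf g) (orderOf h)` is `1` or a prime. -/
def primeCoprimeGraph (G : Type*) [Monoid G] : SimpleGraph G where
  Adj g h := g ≠ h ∧
    (Nat.gcd (orderOf g) (orderOf h) = 1 ∨ (Nat.gcd (orderOf g) (orderOf h)).Prime)
  symm := by
    constructor
    rintro g h ⟨hne, hd⟩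
    exact ⟨hne.symm, by rwa [Nat.gcd_comm]⟩
  loopless := by constructor; rintro g ⟨hne, -⟩; exact hne rfl

/-- A set of vertices is independent if no two of its elements are adjacent. -/
def IsIndepSet {V : Type*} (Γ : SimpleGraph V) (s : Set V) : Prop :=
  s.Pairwise fun a b => ¬ Γ.Adj a b

open scoped Classical in
/-- The independence number of a graph on a finite vertex set. -/
noncomputable def indepNum {V : Type*} [Fintype V] (Γ : SimpleGraph V) : ℕ :=
  Finset.univ.sup fun s : Finset V => if IsIndepSet Γ (s : Set V) then s.card else 0

/-- A graph is split if its vertex set can be partitioned into two disjoint nonempty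
subsets, one a clique and the other an independent set. -/
def IsSplit {V : Type*} (Γ : SimpleGraph V) : Prop :=
  ∃ K I : Set V, K.Nonempty ∧ I.Nonempty ∧ Disjoint K I ∧ K ∪ I = Set.univ ∧
    Γ.IsClique K ∧ IsIndepSet Γ I


open Finset

lemma key_dvd {p q : ℕ} (hp : p.Prime) (hq : q.Prime) (hpq : p ≠ q) {a b i m : ℕ}
    (hm : m ∣ p ^ a * q ^ b) : m ∣ p ^ i * q ^ b ↔ ¬ p ^ (i + 1) ∣ m := by
  have hp0 : 0 < p := hp.pos
  have hq0 : 0 < q := hq.pos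
  have hn0 : p ^ a * q ^ b ≠ 0 := by positivity
  have hm0 : m ≠ 0 := by rintro rfl; exact hn0 (Nat.zero_dvd.mp hm)
  constructor
  · intro h hdvd
    have h1 : p ^ i * p ∣ p ^ i * q ^ b := by
      rw [← pow_succ]; exact hdvd.trans h
    have h2 : p ∣ q ^ b := (Nat.mul_dvd_mul_iff_left (by positivity : 0 < p ^ i)).mp h1
    exact hpq ((Nat.prime_dvd_prime_iff_eq hp hq).mp (hp.dvd_of_dvd_pow h2))
  · intro h
    have hfp : m.factorization p ≤ i := by
      by_contra hlt
      exact h ((Nat.Prime.pow_dvd_iff_le_factorization hp hm0).mpr (not_le.mp hlt))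
    have hmn := (Nat.factorization_le_iff_dvd hm0 hn0).mpr hm
    rw [Finsupp.le_def] at hmn
    rw [← Nat.factorization_le_iff_dvd hm0 (by positivity), Finsupp.le_def]
    intro r
    have h1 := hmn r
    rw [Nat.factorization_mul (by positivity) (by positivity), Nat.Prime.factorization_pow hp,
      Nat.Prime.factorization_pow hq] at h1 ⊢
    simp only [Finsupp.coe_add, Pi.add_apply, Finsupp.single_apply] at h1 ⊢
    by_cases hrp : p = r
    · subst hrp
      simp only [if_true, if_neg hpq.symm, eq_self_iff_true] at h1 ⊢
      simp at h1 ⊢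
      omega
    · simp only [if_neg hrp] at h1 ⊢
      omega

lemma not_adj_of_sq_dvd {p g : ℕ} (hp : p.Prime) (h : p ^ 2 ∣ g) : ¬(g = 1 ∨ g.Prime) := by
  have hp2 := hp.two_le
  rintro (rfl | hg)
  · have := Nat.le_of_dvd one_pos h; nlinarith
  · have hpg : p ∣ g := dvd_trans (dvd_pow_self p two_ne_zero) h
    obtain rfl := (Nat.prime_dvd_prime_iff_eq hp hg).mp hpg
    have := Nat.le_of_dvd hp.pos h
    nlinarith

lemma not_adj_of_two_primes {p q g : ℕ} (hp : p.Prime) (hq : q.Prime) (hpq : p ≠ q)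
    (h1 : p ∣ g) (h2 : q ∣ g) : ¬(g = 1 ∨ g.Prime) := by
  rintro (rfl | hg)
  · exact hp.one_lt.ne' (Nat.eq_one_of_dvd_one h1)
  · exact hpq (((Nat.prime_dvd_prime_iff_eq hp hg).mp h1).trans
      ((Nat.prime_dvd_prime_iff_eq hq hg).mp h2).symm)

lemma decomp_dvd {p q : ℕ} (hp : p.Prime) (hq : q.Prime) (hpq : p ≠ q) {a b m : ℕ}
    (hm : m ∣ p ^ a * q ^ b) (h1 : m ≠ 1) (h2 : ¬m.Prime) :
    p ^ 2 ∣ m ∨ q ^ 2 ∣ m ∨ (p ∣ m ∧ q ∣ m) := by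
  have hm' : m ∣ q ^ b * p ^ a := by rwa [mul_comm] at hm
  by_cases hpm : p ∣ m <;> by_cases hqm : q ∣ m
  · exact Or.inr (Or.inr ⟨hpm, hqm⟩)
  · have hma : m ∣ p ^ a := by
      have := (key_dvd hq hp hpq.symm (i := 0) hm').mpr (by simpa using hqm)
      simpa using this
    obtain ⟨k, hk, rfl⟩ := (Nat.dvd_prime_pow hp).mp hma
    left
    rcases Nat.lt_or_ge k 2 with hk2 | hk2
    · interval_cases k
      · simp at h1
      · rw [pow_one] at h2; exact absurd hp h2
    · exact pow_dvd_pow _ hk2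
  · have hmb : m ∣ q ^ b := by
      have := (key_dvd hp hq hpq (i := 0) hm).mpr (by simpa using hpm)
      simpa using this
    obtain ⟨k, hk, rfl⟩ := (Nat.dvd_prime_pow hq).mp hmb
    right; left
    rcases Nat.lt_or_ge k 2 with hk2 | hk2
    · interval_cases k
      · simp at h1
      · rw [pow_one] at h2; exact absurd hq h2
    · exact pow_dvd_pow _ hk2
  · exfalso
    have hc : Nat.Coprime m (p ^ a * q ^ b) :=
      Nat.Coprime.mul_right (((hp.coprime_iff_not_dvd).mpr hpm).symm.pow_right a)
        (((hq.coprime_iff_not_dvd).mpr hqm).symm.pow_right b)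
    have : m ∣ 1 := hc ▸ Nat.dvd_gcd dvd_rfl hm
    exact h1 (Nat.eq_one_of_dvd_one this)

lemma card_pow_eq_one_of_dvd {G : Type*} [Group G] [Fintype G] [DecidableEq G] [IsCyclic G]
    {d : ℕ} (hd : d ∣ Fintype.card G) (hd0 : 0 < d) :
    #{x : G | x ^ d = 1} = d := by
  refine le_antisymm (IsCyclic.card_pow_eq_one_le hd0) ?_
  obtain ⟨g, hg⟩ := IsCyclic.exists_generator (α := G)
  set h := g ^ (Fintype.card G / d) with hh
  have hcard0 : Fintype.card G ≠ 0 := Fintype.card_ne_zero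
  have horder : orderOf h = d := by
    rw [hh, orderOf_pow, orderOf_eq_card_of_forall_mem_zpowers hg, Nat.card_eq_fintype_card,
      Nat.gcd_eq_right (Nat.div_dvd_of_dvd hd), Nat.div_div_self hd hcard0]
  have hd1 : h ^ d = 1 := horder ▸ pow_orderOf_eq_one h
  have := Finset.card_le_card_of_injOn (fun k => h ^ k)
    (s := Finset.range d) (t := {x : G | x ^ d = 1})
    (fun k _ => by
      simp only [Finset.coe_filter, mem_univ, true_and, Set.mem_setOf_eq]
      rw [← pow_mul, ← pow_mul, mul_comm k, pow_mul, pow_mul, ← hh, hd1, one_pow])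
    (fun k hk l hl hkl => by
      have hk' : k < orderOf h := horder ▸ Finset.mem_range.mp (Finset.mem_coe.mp hk)
      have hl' : l < orderOf h := horder ▸ Finset.mem_range.mp (Finset.mem_coe.mp hl)
      exact pow_injOn_Iio_orderOf hk' hl' hkl)
  simpa using this

theorem indepNum_cyclic_paqb (n p q a b : ℕ) [NeZero n] (hp : p.Prime) (hq : q.Prime)
    (hpq : p ≠ q) (ha : 2 ≤ a) (hb : 2 ≤ b) (hn : n = p ^ a * q ^ b) :
    indepNum (primeCoprimeGraph (Multiplicative (ZMod n))) =
      n - min (p ^ a * q) (min (p * q ^ b) (p ^ a + q ^ b - 1)) := by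
  classical
  set M := min (p ^ a * q) (min (p * q ^ b) (p ^ a + q ^ b - 1)) with hM
  set Γ := primeCoprimeGraph (Multiplicative (ZMod n)) with hΓ
  have hcardG : Fintype.card (Multiplicative (ZMod n)) = n := by
    rw [Fintype.card_multiplicative, ZMod.card]
  have hp0 : 0 < p := hp.pos
  have hq0 : 0 < q := hq.pos
  have hn0 : n ≠ 0 := NeZero.ne n
  have hord : ∀ x : Multiplicative (ZMod n), orderOf x ∣ p ^ a * q ^ b := fun x =>
    (orderOf_dvd_card.trans (dvd_of_eq hcardG)).trans (dvd_of_eq hn)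
  have hpa4 : 4 ≤ p ^ a := by
    calc (4:ℕ) = 2 ^ 2 := by norm_num
    _ ≤ 2 ^ a := Nat.pow_le_pow_right (by norm_num) ha
    _ ≤ p ^ a := Nat.pow_le_pow_left hp.two_le a
  have hqb4 : 4 ≤ q ^ b := by
    calc (4:ℕ) = 2 ^ 2 := by norm_num
    _ ≤ 2 ^ b := Nat.pow_le_pow_right (by norm_num) hb
    _ ≤ q ^ b := Nat.pow_le_pow_left hq.two_le b
  have hM1 : M ≤ p ^ a * q := min_le_left _ _
  have hM2 : M ≤ p * q ^ b := le_trans (min_le_right _ _) (min_le_left _ _)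
  have hM3 : M ≤ p ^ a + q ^ b - 1 := le_trans (min_le_right _ _) (min_le_right _ _)
  -- translations between power conditions and order divisibility
  have t1 : ∀ x : Multiplicative (ZMod n), x ^ (p * q ^ b) = 1 ↔ ¬ p ^ 2 ∣ orderOf x := by
    intro x
    rw [← orderOf_dvd_iff_pow_eq_one]
    have h := key_dvd hp hq hpq (i := 1) (hord x)
    rw [pow_one] at h
    exact h
  have t2 : ∀ x : Multiplicative (ZMod n), x ^ (p ^ a * q) = 1 ↔ ¬ q ^ 2 ∣ orderOf x := by
    intro x
    rw [← orderOf_dvd_iff_pow_eq_one]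
    have h := key_dvd hq hp hpq.symm (i := 1) (show orderOf x ∣ q ^ b * p ^ a by
      rw [mul_comm]; exact hord x)
    rw [pow_one] at h
    rw [mul_comm]
    exact h
  have t3 : ∀ x : Multiplicative (ZMod n), x ^ (q ^ b) = 1 ↔ ¬ p ∣ orderOf x := by
    intro x
    rw [← orderOf_dvd_iff_pow_eq_one]
    have h := key_dvd hp hq hpq (i := 0) (hord x)
    simpa using h
  have t4 : ∀ x : Multiplicative (ZMod n), x ^ (p ^ a) = 1 ↔ ¬ q ∣ orderOf x := by
    intro x
    rw [← orderOf_dvd_iff_pow_eq_one]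
    have h := key_dvd hq hp hpq.symm (i := 0) (show orderOf x ∣ q ^ b * p ^ a by
      rw [mul_comm]; exact hord x)
    simpa using h
  -- cardinalities of the "pow = 1" sets
  have cA1 : (Finset.univ.filter fun x : Multiplicative (ZMod n) => x ^ (p * q ^ b) = 1).card
      = p * q ^ b := by
    apply card_pow_eq_one_of_dvd
    · rw [hcardG, hn]; exact mul_dvd_mul (dvd_pow_self p (by omega)) dvd_rfl
    · positivity
  have cA2 : (Finset.univ.filter fun x : Multiplicative (ZMod n) => x ^ (p ^ a * q) = 1).card
      = p ^ a * q := by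
    apply card_pow_eq_one_of_dvd
    · rw [hcardG, hn]; exact mul_dvd_mul dvd_rfl (dvd_pow_self q (by omega))
    · positivity
  have cP : (Finset.univ.filter fun x : Multiplicative (ZMod n) => x ^ (p ^ a) = 1).card
      = p ^ a := by
    apply card_pow_eq_one_of_dvd
    · rw [hcardG, hn]; exact dvd_mul_right _ _
    · positivity
  have cQ : (Finset.univ.filter fun x : Multiplicative (ZMod n) => x ^ (q ^ b) = 1).card
      = q ^ b := by
    apply card_pow_eq_one_of_dvd
    · rw [hcardG, hn]; exact dvd_mul_left _ _
    · positivity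
  have hinter : (Finset.univ.filter fun x : Multiplicative (ZMod n) => x ^ (p ^ a) = 1)
      ∩ (Finset.univ.filter fun x : Multiplicative (ZMod n) => x ^ (q ^ b) = 1)
      = {(1 : Multiplicative (ZMod n))} := by
    ext x
    simp only [Finset.mem_inter, Finset.mem_filter, Finset.mem_univ, true_and,
      Finset.mem_singleton]
    constructor
    · rintro ⟨h1, h2⟩
      have d1 : orderOf x ∣ p ^ a := orderOf_dvd_iff_pow_eq_one.mpr h1
      have d2 : orderOf x ∣ q ^ b := orderOf_dvd_iff_pow_eq_one.mpr h2
      have hcop : Nat.Coprime (p ^ a) (q ^ b) :=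
        Nat.Coprime.pow a b ((Nat.coprime_primes hp hq).mpr hpq)
      have hd : orderOf x ∣ 1 := hcop ▸ Nat.dvd_gcd d1 d2
      rw [Nat.dvd_one, orderOf_eq_one_iff] at hd
      exact hd
    · rintro rfl
      exact ⟨one_pow _, one_pow _⟩
  have cA3 : (Finset.univ.filter fun x : Multiplicative (ZMod n) =>
      x ^ (p ^ a) = 1 ∨ x ^ (q ^ b) = 1).card = p ^ a + q ^ b - 1 := by
    rw [Finset.filter_or]
    have hcU := Finset.card_union_add_card_inter
      (Finset.univ.filter fun x : Multiplicative (ZMod n) => x ^ (p ^ a) = 1)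
      (Finset.univ.filter fun x : Multiplicative (ZMod n) => x ^ (q ^ b) = 1)
    rw [hinter, Finset.card_singleton, cP, cQ] at hcU
    omega
  -- cardinalities of the complements
  have e1 : (Finset.univ.filter fun x : Multiplicative (ZMod n) =>
      ¬ x ^ (p * q ^ b) = 1).card = n - p * q ^ b := by
    have h := Finset.card_filter_add_card_filter_not
      (s := (Finset.univ : Finset (Multiplicative (ZMod n))))
      (p := fun x : Multiplicative (ZMod n) => x ^ (p * q ^ b) = 1)
    rw [Finset.card_univ, hcardG, cA1] at h
    omega
  have e2 : (Finset.univ.filter fun x : Multiplicative (ZMod n) =>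
      ¬ x ^ (p ^ a * q) = 1).card = n - p ^ a * q := by
    have h := Finset.card_filter_add_card_filter_not
      (s := (Finset.univ : Finset (Multiplicative (ZMod n))))
      (p := fun x : Multiplicative (ZMod n) => x ^ (p ^ a * q) = 1)
    rw [Finset.card_univ, hcardG, cA2] at h
    omega
  have e3 : (Finset.univ.filter fun x : Multiplicative (ZMod n) =>
      ¬ (x ^ (p ^ a) = 1 ∨ x ^ (q ^ b) = 1)).card = n - (p ^ a + q ^ b - 1) := by
    have h := Finset.card_filter_add_card_filter_not
      (s := (Finset.univ : Finset (Multiplicative (ZMod n))))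
      (p := fun x : Multiplicative (ZMod n) => x ^ (p ^ a) = 1 ∨ x ^ (q ^ b) = 1)
    rw [Finset.card_univ, hcardG, cA3] at h
    omega
  -- membership characterizations of the complements
  have m1 : ∀ x : Multiplicative (ZMod n),
      x ∈ (Finset.univ.filter fun x : Multiplicative (ZMod n) => ¬ x ^ (p * q ^ b) = 1)
      ↔ p ^ 2 ∣ orderOf x := by
    intro x; simp [t1 x]
  have m2 : ∀ x : Multiplicative (ZMod n),
      x ∈ (Finset.univ.filter fun x : Multiplicative (ZMod n) => ¬ x ^ (p ^ a * q) = 1)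
      ↔ q ^ 2 ∣ orderOf x := by
    intro x; simp [t2 x]
  have m3 : ∀ x : Multiplicative (ZMod n),
      x ∈ (Finset.univ.filter fun x : Multiplicative (ZMod n) =>
        ¬ (x ^ (p ^ a) = 1 ∨ x ^ (q ^ b) = 1))
      ↔ p ∣ orderOf x ∧ q ∣ orderOf x := by
    intro x
    simp only [Finset.mem_filter, Finset.mem_univ, true_and, t3 x, t4 x]
    tauto
  -- independence of the complements
  have i1 : IsIndepSet Γ ((Finset.univ.filter fun x : Multiplicative (ZMod n) =>
      ¬ x ^ (p * q ^ b) = 1) : Set (Multiplicative (ZMod n))) := by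
    intro x hx y hy hne hadj
    exact not_adj_of_sq_dvd hp
      (Nat.dvd_gcd ((m1 x).mp (Finset.mem_coe.mp hx)) ((m1 y).mp (Finset.mem_coe.mp hy)))
      hadj.2
  have i2 : IsIndepSet Γ ((Finset.univ.filter fun x : Multiplicative (ZMod n) =>
      ¬ x ^ (p ^ a * q) = 1) : Set (Multiplicative (ZMod n))) := by
    intro x hx y hy hne hadj
    exact not_adj_of_sq_dvd hq
      (Nat.dvd_gcd ((m2 x).mp (Finset.mem_coe.mp hx)) ((m2 y).mp (Finset.mem_coe.mp hy)))
      hadj.2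
  have i3 : IsIndepSet Γ ((Finset.univ.filter fun x : Multiplicative (ZMod n) =>
      ¬ (x ^ (p ^ a) = 1 ∨ x ^ (q ^ b) = 1)) : Set (Multiplicative (ZMod n))) := by
    intro x hx y hy hne hadj
    obtain ⟨hxp, hxq⟩ := (m3 x).mp (Finset.mem_coe.mp hx)
    obtain ⟨hyp, hyq⟩ := (m3 y).mp (Finset.mem_coe.mp hy)
    exact not_adj_of_two_primes hp hq hpq
      (Nat.dvd_gcd hxp hyp) (Nat.dvd_gcd hxq hyq) hadj.2
  -- lower bound machinery
  have lb : ∀ t : Finset (Multiplicative (ZMod n)), IsIndepSet Γ ↑t → t.card ≤ indepNum Γ := by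
    intro t ht
    unfold indepNum
    refine le_trans ?_ (Finset.le_sup (Finset.mem_univ t))
    simp [ht]
  -- main upper bound for an arbitrary independent set
  have main : ∀ s : Finset (Multiplicative (ZMod n)), IsIndepSet Γ ↑s → s.card ≤ n - M := by
    intro s hs
    by_cases hc1 : ∀ x ∈ s, p ^ 2 ∣ orderOf x
    · have hsub : s ⊆ Finset.univ.filter fun x : Multiplicative (ZMod n) =>
          ¬ x ^ (p * q ^ b) = 1 := fun x hx => (m1 x).mpr (hc1 x hx)
      calc s.card ≤ _ := Finset.card_le_card hsub
        _ = n - p * q ^ b := e1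
        _ ≤ n - M := Nat.sub_le_sub_left hM2 n
    by_cases hc2 : ∀ x ∈ s, q ^ 2 ∣ orderOf x
    · have hsub : s ⊆ Finset.univ.filter fun x : Multiplicative (ZMod n) =>
          ¬ x ^ (p ^ a * q) = 1 := fun x hx => (m2 x).mpr (hc2 x hx)
      calc s.card ≤ _ := Finset.card_le_card hsub
        _ = n - p ^ a * q := e2
        _ ≤ n - M := Nat.sub_le_sub_left hM1 n
    push_neg at hc1 hc2
    obtain ⟨u, hus, hu⟩ := hc1
    obtain ⟨v, hvs, hv⟩ := hc2
    have hsum : p ^ a + q ^ b ≤ n := by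
      rw [hn]; nlinarith
    by_cases hcard : s.card ≤ 1
    · omega
    · have pair : ∀ z ∈ s, ∀ w ∈ s, z ≠ w →
          (p ^ 2 ∣ orderOf z ∧ p ^ 2 ∣ orderOf w) ∨
          (q ^ 2 ∣ orderOf z ∧ q ^ 2 ∣ orderOf w) ∨
          (p ∣ orderOf z ∧ q ∣ orderOf z ∧ p ∣ orderOf w ∧ q ∣ orderOf w) := by
        intro z hz w hw hzw
        have hnadj := hs (Finset.mem_coe.mpr hz) (Finset.mem_coe.mpr hw) hzw
        have hng : ¬ (Nat.gcd (orderOf z) (orderOf w) = 1 ∨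
            (Nat.gcd (orderOf z) (orderOf w)).Prime) := fun hor => hnadj ⟨hzw, hor⟩
        push_neg at hng
        have hgd : Nat.gcd (orderOf z) (orderOf w) ∣ p ^ a * q ^ b :=
          (Nat.gcd_dvd_left _ _).trans (hord z)
        rcases decomp_dvd hp hq hpq hgd hng.1 hng.2 with h | h | ⟨h1, h2⟩
        · exact Or.inl ⟨h.trans (Nat.gcd_dvd_left _ _), h.trans (Nat.gcd_dvd_right _ _)⟩
        · exact Or.inr (Or.inl ⟨h.trans (Nat.gcd_dvd_left _ _),
            h.trans (Nat.gcd_dvd_right _ _)⟩)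
        · exact Or.inr (Or.inr ⟨h1.trans (Nat.gcd_dvd_left _ _),
            h2.trans (Nat.gcd_dvd_left _ _), h1.trans (Nat.gcd_dvd_right _ _),
            h2.trans (Nat.gcd_dvd_right _ _)⟩)
      have huv : p ∣ orderOf u ∧ q ∣ orderOf u ∧ p ∣ orderOf v ∧ q ∣ orderOf v := by
        by_cases h : u = v
        · subst h
          obtain ⟨w, hw, hwu⟩ := Finset.exists_mem_ne (s := s) (by omega) u
          rcases pair u hus w hw hwu.symm with ⟨h1, -⟩ | ⟨h1, -⟩ | ⟨h1, h2, -, -⟩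
          · exact absurd h1 hu
          · exact absurd h1 hv
          · exact ⟨h1, h2, h1, h2⟩
        · rcases pair u hus v hvs h with ⟨h1, -⟩ | ⟨-, h2⟩ | ⟨h1, h2, h3, h4⟩
          · exact absurd h1 hu
          · exact absurd h2 hv
          · exact ⟨h1, h2, h3, h4⟩
      have hall : ∀ z ∈ s, p ∣ orderOf z ∧ q ∣ orderOf z := by
        intro z hz
        by_cases hz1 : z = u
        · subst hz1; exact ⟨huv.1, huv.2.1⟩
        by_cases hz2 : z = v
        · subst hz2; exact ⟨huv.2.2.1, huv.2.2.2⟩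
        have hq' : q ∣ orderOf z := by
          rcases pair z hz u hus hz1 with ⟨-, h1⟩ | ⟨h1, -⟩ | ⟨-, h1, -, -⟩
          · exact absurd h1 hu
          · exact dvd_trans (dvd_pow_self q two_ne_zero) h1
          · exact h1
        have hp' : p ∣ orderOf z := by
          rcases pair z hz v hvs hz2 with ⟨h1, -⟩ | ⟨-, h1⟩ | ⟨h1, -, -, -⟩
          · exact dvd_trans (dvd_pow_self p two_ne_zero) h1
          · exact absurd h1 hv
          · exact h1
        exact ⟨hp', hq'⟩
      have hsub : s ⊆ Finset.univ.filter fun x : Multiplicative (ZMod n) =>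
          ¬ (x ^ (p ^ a) = 1 ∨ x ^ (q ^ b) = 1) := fun x hx => (m3 x).mpr (hall x hx)
      calc s.card ≤ _ := Finset.card_le_card hsub
        _ = n - (p ^ a + q ^ b - 1) := e3
        _ ≤ n - M := Nat.sub_le_sub_left hM3 n
  -- conclude
  have ub : indepNum Γ ≤ n - M := by
    unfold indepNum
    refine Finset.sup_le fun s _ => ?_
    split_ifs with hsi
    · exact main s hsi
    · exact Nat.zero_le _
  have lb1 : n - p * q ^ b ≤ indepNum Γ := e1 ▸ lb _ i1
  have lb2 : n - p ^ a * q ≤ indepNum Γ := e2 ▸ lb _ i2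
  have lb3 : n - (p ^ a + q ^ b - 1) ≤ indepNum Γ := e3 ▸ lb _ i3
  have hMcases : M = p ^ a * q ∨ M = p * q ^ b ∨ M = p ^ a + q ^ b - 1 := by
    rw [hM]
    rcases min_choice (p ^ a * q) (min (p * q ^ b) (p ^ a + q ^ b - 1)) with h | h <;> rw [h]
    · exact Or.inl rfl
    · rcases min_choice (p * q ^ b) (p ^ a + q ^ b - 1) with h2 | h2 <;> rw [h2]
      · exact Or.inr (Or.inl rfl)
      · exact Or.inr (Or.inr rfl)
  refine le_antisymm ub ?_
  rcases hMcases with h | h | h <;> rw [h]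
  · exact lb2
  · exact lb1
  · exact lb3
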